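/- Let r ≥ 0 and x, y : ℤ → ℝ be positive sequences satisfying x(n+1) = 1/y(n-2r-1) and y(n+1) = y(n-2r-1)/(x(n)y(n)) for n ≥ 0, with A = x(0)y(0) > 1. Then the subsequence y((2r+2)n) = A^n · y(0) tends to infinity and x((2r+2)n + 2) = 1/(A^n · y(-2r)) tends to zero as n → ∞; in particular the solution is unbounded. -/

import Mathlib

open Filter in
theorem stmt_15 (r : ℕ) (x y : ℤ → ℝ)
    (hpos : ∀ n : ℤ, 0 < x n ∧ 0 < y n)
    (hx : ∀ n : ℤ, 0 ≤ n → x (n + 1) = 1 / y (n - (2 * r + 1)))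
    (hy : ∀ n : ℤ, 0 ≤ n → y (n + 1) = y (n - (2 * r + 1)) / (x n * y n))
    (A : ℝ) (hA : A = x 0 * y 0) (hA1 : 1 < A) :
    (∀ n : ℕ, y ((2 * r + 2) * n) = A ^ n * y 0) ∧
    Tendsto (fun n : ℕ => y ((2 * r + 2) * n)) atTop atTop ∧
    (∀ n : ℕ, x ((2 * r + 2) * n + 2) = 1 / (A ^ n * y (-(2 * (r : ℤ))))) ∧
    Tendsto (fun n : ℕ => x ((2 * r + 2) * n + 2)) atTop (nhds 0) := by
  have hA0 : A ≠ 0 := by positivity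
  have hxne : ∀ n : ℤ, x n ≠ 0 := fun n => ne_of_gt (hpos n).1
  have hyne : ∀ n : ℤ, y n ≠ 0 := fun n => ne_of_gt (hpos n).2
  -- product recursion
  have hprod : ∀ n : ℤ, 0 ≤ n → x (n + 1) * y (n + 1) = 1 / (x n * y n) := by
    intro n hn
    rw [hx n hn, hy n hn]
    field_simp
    rw [div_eq_div_iff (mul_ne_zero (mul_ne_zero (hyne _) (hxne n)) (hyne n)) (mul_ne_zero (hxne n) (hyne n))]
    ring
  -- parity of products
  have hpar : ∀ k : ℕ, x (2 * (k : ℤ)) * y (2 * (k : ℤ)) = A ∧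
      x (2 * (k : ℤ) + 1) * y (2 * (k : ℤ) + 1) = 1 / A := by
    intro k
    induction k with
    | zero => 
      constructor
      · simpa using hA.symm
      · have := hprod 0 le_rfl
        simpa [← hA] using this
    | succ k ih =>
      have h1 : x (2 * (k : ℤ) + 1 + 1) * y (2 * (k : ℤ) + 1 + 1) = A := by
        rw [hprod (2 * (k : ℤ) + 1) (by positivity), ih.2]
        field_simp
      have h2 : x (2 * (k : ℤ) + 2 + 1) * y (2 * (k : ℤ) + 2 + 1) = 1 / A := by
        rw [hprod (2 * (k : ℤ) + 2) (by positivity)]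
        rw [show (2 * (k : ℤ) + 2) = 2 * (k : ℤ) + 1 + 1 by ring, h1]
      constructor
      · push_cast; rw [show 2 * ((k : ℤ) + 1) = 2 * (k : ℤ) + 1 + 1 by ring]; exact h1
      · push_cast; rw [show 2 * ((k : ℤ) + 1) + 1 = 2 * (k : ℤ) + 2 + 1 by ring]; exact h2
  -- odd products, general form
  have hodd : ∀ m : ℤ, 0 ≤ m → m % 2 = 1 → x m * y m = 1 / A := by
    intro m hm hm2
    lift m to ℕ using hm
    rw [show ((m : ℤ)) = 2 * ((m / 2 : ℕ) : ℤ) + 1 by omega]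
    exact (hpar _).2
  -- main y recursion
  have key : ∀ s : ℤ, 0 ≤ s + (2 * r + 1) → (s + (2 * r + 1)) % 2 = 1 →
      y (s + (2 * r + 2)) = A * y s := by
    intro s hm hs2
    have h := hy (s + (2 * r + 1)) hm
    rw [show s + (2 * (r:ℤ) + 1) - (2 * r + 1) = s by ring] at h
    have hp : x (s + (2 * r + 1)) * y (s + (2 * r + 1)) = 1 / A := by
      apply hodd _ hm; omega
    rw [hp] at h
    rw [show s + (2 * (r:ℤ) + 2) = s + (2 * r + 1) + 1 by ring, h]
    field_simp
  -- first claim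
  have hyA : ∀ n : ℕ, y ((2 * r + 2) * n) = A ^ n * y 0 := by
    intro n
    induction n with
    | zero => simp
    | succ n ih =>
      have h := key ((2 * r + 2) * n)
        (by positivity)
        (by rw [show ((2*(r:ℤ)+2)*n + (2*(r:ℤ)+1)) = 2*(((r:ℤ)+1)*n + r) + 1 by ring]; omega)
      rw [show ((2 * (r:ℤ) + 2) * (n + 1 : ℕ) : ℤ) = (2 * r + 2) * n + (2 * r + 2) by push_cast; ring,
        h, ih]
      ring
  -- shifted claim
  have hyB : ∀ n : ℕ, y ((2 * r + 2) * n - 2 * r) = A ^ n * y (-(2 * (r:ℤ))) := by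
    intro n
    induction n with
    | zero => simp
    | succ n ih =>
      have h := key ((2 * r + 2) * n - 2 * r)
        (by rw [show ((2*(r:ℤ)+2)*n - 2*r + (2*(r:ℤ)+1)) = 2*(((r:ℤ)+1)*n) + 1 by ring]; positivity)
        (by rw [show ((2*(r:ℤ)+2)*n - 2*r + (2*(r:ℤ)+1)) = 2*(((r:ℤ)+1)*n) + 1 by ring]; omega)
      rw [show ((2 * (r:ℤ) + 2) * (n + 1 : ℕ) - 2 * r : ℤ)
          = ((2 * r + 2) * n - 2 * r) + (2 * r + 2) by push_cast; ring, h, ih]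
      ring
  have hxA : ∀ n : ℕ, x ((2 * r + 2) * n + 2) = 1 / (A ^ n * y (-(2 * (r : ℤ)))) := by
    intro n
    have h := hx ((2 * r + 2) * n + 1) (by positivity)
    rw [show ((2 * (r:ℤ) + 2) * n + 1 + 1 : ℤ) = (2 * r + 2) * n + 2 by ring,
      show ((2 * (r:ℤ) + 2) * n + 1 - (2 * r + 1) : ℤ) = (2 * r + 2) * n - 2 * r by ring,
      hyB n] at h
    exact h
  have hylim : Tendsto (fun n : ℕ => y ((2 * r + 2) * n)) atTop atTop := by
    have h1 : Tendsto (fun n : ℕ => A ^ n * y 0) atTop atTop :=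
      (tendsto_pow_atTop_atTop_of_one_lt hA1).atTop_mul_const (hpos 0).2
    exact h1.congr (fun n => (hyA n).symm)
  refine ⟨hyA, hylim, hxA, ?_⟩
  have h1 : Tendsto (fun n : ℕ => A ^ n * y (-(2 * (r:ℤ)))) atTop atTop :=
    (tendsto_pow_atTop_atTop_of_one_lt hA1).atTop_mul_const (hpos _).2
  have h2 := h1.inv_tendsto_atTop
  refine h2.congr (fun n => ?_)
  simp [hxA n, one_div]
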